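/- Let (⋯ →f₁→ X₁ →f₀→ X₀) be an inverse sequence of complete metric spaces and uniformly continuous maps with inverse limit L, and suppose the sequence is Cauchy: for each i and each ε > 0 there exists k ≥ i such that for every j ≥ k the set fᵏᵢ(X_k) is contained in the ε-neighborhood of fʲᵢ(X_j) in Xᵢ. Then the sequence converges: for each i and each ε > 0, for all but finitely many j the set fʲᵢ(X_j) is contained in the ε-neighborhood of f^∞ᵢ(L) in Xᵢ. In particular, if every Xᵢ is nonempty, then L is nonempty. -/
import Mathlib


/-- An inverse sequence of metric spaces `⋯ → X₂ → X₁ → X₀`, presented by its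
compatible composite bonding maps `bond h : X j → X i` for `i ≤ j`. -/
structure MetInvSeq (X : ℕ → Type) [∀ i, MetricSpace (X i)] : Type where
  bond : ∀ ⦃i j : ℕ⦄, i ≤ j → X j → X i
  bond_refl : ∀ i (x : X i), bond (le_refl i) x = x
  bond_comp : ∀ ⦃i j k : ℕ⦄ (hij : i ≤ j) (hjk : j ≤ k) (x : X k),
    bond (hij.trans hjk) x = bond hij (bond hjk x)

lemma MetInvSeq.modulus {X : ℕ → Type} [∀ i, MetricSpace (X i)]
    (S : MetInvSeq X) (huc : ∀ ⦃i j : ℕ⦄ (h : i ≤ j), UniformContinuous (S.bond h))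
    (n : ℕ) {η : ℝ} (hη : 0 < η) :
    ∃ δ > 0, ∀ a b : X n, dist a b < δ →
      ∀ m (h : m ≤ n), dist (S.bond h a) (S.bond h b) < η := by
  induction n with
  | zero =>
    refine ⟨η, hη, fun a b hab m hm => ?_⟩
    obtain rfl : m = 0 := Nat.le_zero.mp hm
    rw [show S.bond hm a = a from S.bond_refl 0 a,
        show S.bond hm b = b from S.bond_refl 0 b]
    exact hab
  | succ n ih =>
    obtain ⟨δ', hδ'pos, hδ'⟩ := ih
    obtain ⟨δ₁, hδ₁pos, hδ₁⟩ :=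
      Metric.uniformContinuous_iff.mp (huc (Nat.le_succ n)) δ' hδ'pos
    refine ⟨min δ₁ η, lt_min hδ₁pos hη, fun a b hab m hm => ?_⟩
    rcases Nat.lt_succ_iff_lt_or_eq.mp (Nat.lt_succ_of_le hm) with hlt | rfl
    · have hmn : m ≤ n := Nat.lt_succ_iff.mp hlt
      have h1 : S.bond hm a = S.bond hmn (S.bond (Nat.le_succ n) a) :=
        S.bond_comp hmn (Nat.le_succ n) a
      have h2 : S.bond hm b = S.bond hmn (S.bond (Nat.le_succ n) b) :=
        S.bond_comp hmn (Nat.le_succ n) b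
      rw [h1, h2]
      exact hδ' _ _ (hδ₁ (lt_of_lt_of_le hab (min_le_left _ _))) m hmn
    · rw [show S.bond hm a = a from S.bond_refl _ a,
          show S.bond hm b = b from S.bond_refl _ b]
      exact lt_of_lt_of_le hab (min_le_right _ _)

/-- A Cauchy inverse sequence of complete metric spaces with uniformly continuous
bonding maps converges: for each `i` and `ε > 0`, for all but finitely many `j` the
image `fʲᵢ(Xⱼ)` is contained in the `ε`-neighborhood of the image of the inverse
limit `L` in `Xᵢ`.  In particular, if every `Xᵢ` is nonempty then `L` is nonempty. -/
theorem converges_of_cauchy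
    {X : ℕ → Type} [∀ i, MetricSpace (X i)] [∀ i, CompleteSpace (X i)]
    (S : MetInvSeq X)
    (huc : ∀ ⦃i j : ℕ⦄ (h : i ≤ j), UniformContinuous (S.bond h))
    (hcauchy : ∀ i (ε : ℝ), 0 < ε → ∃ k, ∃ hik : i ≤ k, ∀ j (hkj : k ≤ j),
      ∀ x : X k, ∃ y : X j,
        dist (S.bond hik x) (S.bond (hik.trans hkj) y) < ε) :
    (∀ i (ε : ℝ), 0 < ε → ∃ N, ∀ j (_ : N ≤ j) (hij : i ≤ j), ∀ x : X j,
      ∃ g : {g : ∀ i, X i // ∀ i, S.bond (Nat.le_succ i) (g (i + 1)) = g i},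
        dist (S.bond hij x) (g.1 i) < ε) ∧
    ((∀ i, Nonempty (X i)) →
      Nonempty {g : ∀ i, X i // ∀ i, S.bond (Nat.le_succ i) (g (i + 1)) = g i}) := by
  have main : ∀ i (ε : ℝ), 0 < ε → ∃ N, ∀ j (_ : N ≤ j) (hij : i ≤ j), ∀ x : X j,
      ∃ g : {g : ∀ i, X i // ∀ i, S.bond (Nat.le_succ i) (g (i + 1)) = g i},
        dist (S.bond hij x) (g.1 i) < ε := by
    intro i ε hε
    -- moduli
    have hmod : ∀ n : ℕ, ∃ δ, 0 < δ ∧ ∀ a b : X n, dist a b < δ →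
        ∀ m (h : m ≤ n), dist (S.bond h a) (S.bond h b) < ε / 2 ^ (n + 2) := by
      intro n
      obtain ⟨δ, h1, h2⟩ := S.modulus huc n (show (0:ℝ) < ε / 2 ^ (n+2) by positivity)
      exact ⟨δ, h1, h2⟩
    choose δ hδpos hδ using hmod
    choose K hK hP using fun n => hcauchy n (δ n) (hδpos n)
    refine ⟨K i, ?_⟩
    intro j hj hij x
    -- the one-step construction
    have step : ∀ n (a : X (K (i+n))), ∃ b : X (K (i+n+1)),
        dist (S.bond (hK (i+n)) a)
          (S.bond ((Nat.le_succ (i+n)).trans (hK (i+n+1))) b) < δ (i+n) := by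
      intro n a
      obtain ⟨y, hy⟩ := hP (i+n) (max (K (i+n)) (K (i+n+1))) (le_max_left _ _) a
      refine ⟨S.bond (le_max_right _ _) y, ?_⟩
      have hcmp : S.bond ((Nat.le_succ (i+n)).trans (hK (i+n+1)))
          (S.bond (le_max_right (K (i+n)) (K (i+n+1))) y)
          = S.bond ((hK (i+n)).trans (le_max_left (K (i+n)) (K (i+n+1)))) y :=
        (S.bond_comp ((Nat.le_succ (i+n)).trans (hK (i+n+1)))
          (le_max_right (K (i+n)) (K (i+n+1))) y).symm
      rw [hcmp]
      exact hy
    choose f hf using step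
    -- the recursively constructed points
    obtain ⟨u, hu0, huS⟩ : ∃ u : ∀ n : ℕ, X (K (i + n)),
        u 0 = S.bond hj x ∧ ∀ n, u (n+1) = f n (u n) :=
      ⟨fun n => Nat.rec (S.bond hj x) f n, rfl, fun n => rfl⟩
    have hne : ∀ m, Nonempty (X m) :=
      fun m => ⟨S.bond ((Nat.le_add_left m i).trans (hK (i+m))) (u m)⟩
    -- projected points at each level
    obtain ⟨w, hw⟩ : ∃ w : ∀ m, ℕ → X m, ∀ m n (h : m ≤ i+n),
        w m n = S.bond (h.trans (hK (i+n))) (u n) :=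
      ⟨fun m n => if h : m ≤ i + n then S.bond (h.trans (hK (i+n))) (u n)
        else Classical.choice (hne m), fun m n h => dif_pos h⟩
    -- step estimate
    have hstep : ∀ m n, m ≤ i + n → dist (w m n) (w m (n+1)) < ε / 2 ^ (i + n + 2) := by
      intro m n hm
      rw [hw m n hm, hw m (n+1) (hm.trans (Nat.le_succ _))]
      have hfn := hf n (u n)
      rw [← huS n] at hfn
      have hd := hδ (i+n) _ _ hfn m hm
      rwa [← S.bond_comp hm (hK (i+n)) (u n),
           ← S.bond_comp hm ((Nat.le_succ (i+n)).trans (hK (i+n+1))) (u (n+1))] at hd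
    -- geometric comparison
    have hgeom : ∀ a b : ℕ, ε / 2 ^ (a + b) = ε / 2 ^ a * (1/2) ^ b := by
      intro a b
      rw [pow_add, div_pow, one_pow, div_mul_div_comm, mul_one]
    -- Cauchy sequences at each level
    have hcs : ∀ m, CauchySeq (fun n => w m (m + n)) := by
      intro m
      refine cauchySeq_of_le_geometric (1/2) (ε / 2 ^ (i+m+2)) (by norm_num) (fun n => ?_)
      have h1 : m ≤ i + (m + n) := by omega
      refine le_trans (hstep m (m+n) h1).le (le_of_eq ?_)
      rw [show i + (m+n) + 2 = (i+m+2) + n from by omega, hgeom]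
    have hglim : ∀ m, ∃ a : X m, Filter.Tendsto (fun n => w m (m + n)) Filter.atTop (nhds a) :=
      fun m => cauchySeq_tendsto_of_complete (hcs m)
    choose g hg using hglim
    -- compatibility
    have hcompat : ∀ m, S.bond (Nat.le_succ m) (g (m+1)) = g m := by
      intro m
      have t1 : Filter.Tendsto (fun n => S.bond (Nat.le_succ m) (w (m+1) ((m+1) + n)))
          Filter.atTop (nhds (S.bond (Nat.le_succ m) (g (m+1)))) :=
        (((huc (Nat.le_succ m)).continuous.tendsto (g (m+1))).comp (hg (m+1)))
      have e : ∀ n, S.bond (Nat.le_succ m) (w (m+1) ((m+1) + n)) = w m ((m+1) + n) := by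
        intro n
        have h1 : m + 1 ≤ i + ((m+1) + n) := by omega
        rw [hw (m+1) ((m+1)+n) h1, hw m ((m+1)+n) ((Nat.le_succ m).trans h1)]
        exact (S.bond_comp (Nat.le_succ m) (h1.trans (hK (i+((m+1)+n)))) (u ((m+1)+n))).symm
      have t1' : Filter.Tendsto (fun n => w m ((m+1) + n))
          Filter.atTop (nhds (S.bond (Nat.le_succ m) (g (m+1)))) := by
        refine Filter.Tendsto.congr (fun n => ?_) t1
        exact e n
      have t2 : Filter.Tendsto (fun n => w m (m + (n+1))) Filter.atTop (nhds (g m)) :=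
        (hg m).comp (Filter.tendsto_add_atTop_nat 1)
      have t2' : Filter.Tendsto (fun n => w m ((m+1) + n)) Filter.atTop (nhds (g m)) :=
        Filter.Tendsto.congr (fun n => congrArg (w m) (by omega)) t2
      exact tendsto_nhds_unique t1' t2'
    refine ⟨⟨g, hcompat⟩, ?_⟩
    -- the full sequence w i converges to g i
    have hwi_step : ∀ n, dist (w i n) (w i (n+1)) ≤ ε / 2 ^ (i+2) * (1/2) ^ n := by
      intro n
      refine le_trans (hstep i n (by omega)).le (le_of_eq ?_)
      rw [show i + n + 2 = (i+2) + n from by omega, hgeom]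
    have hwicauchy : CauchySeq (w i) :=
      cauchySeq_of_le_geometric (1/2) (ε / 2 ^ (i+2)) (by norm_num) hwi_step
    obtain ⟨a, ha⟩ := cauchySeq_tendsto_of_complete hwicauchy
    have hashift : Filter.Tendsto (fun n => w i (i + n)) Filter.atTop (nhds a) := by
      have := ha.comp (Filter.tendsto_add_atTop_nat i)
      refine Filter.Tendsto.congr (fun n => ?_) this
      simp [Nat.add_comm]
    have hag : a = g i := tendsto_nhds_unique hashift (hg i)
    rw [hag] at ha
    have hdist : dist (w i 0) (g i) ≤ (ε / 2 ^ (i+2)) / (1 - 1/2) :=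
      dist_le_of_le_geometric_of_tendsto₀ (1/2) (ε / 2 ^ (i+2)) (by norm_num) hwi_step ha
    have hx0 : S.bond hij x = w i 0 := by
      rw [hw i 0 (by omega), hu0]
      exact S.bond_comp ((le_refl i).trans (hK i)) hj x
    rw [hx0]
    refine lt_of_le_of_lt hdist ?_
    have h4 : (4:ℝ) ≤ 2 ^ (i+2) := by
      calc (4:ℝ) = 2 ^ 2 := by norm_num
      _ ≤ 2 ^ (i+2) := by
        apply pow_le_pow_right₀ (by norm_num)
        omega
    have hA : (0:ℝ) < 2 ^ (i+2) := by positivity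
    have key : ε / 2 ^ (i+2) / (1 - 1/2) = ε * 2 / 2 ^ (i+2) := by ring
    rw [key, div_lt_iff₀ hA]
    nlinarith
  refine ⟨main, fun hne' => ?_⟩
  obtain ⟨N, hN⟩ := main 0 1 one_pos
  obtain ⟨g, -⟩ := hN N le_rfl (Nat.zero_le N) (Classical.choice (hne' N))
  exact ⟨g⟩
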